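/- For every k with 0 < k < |A|^{|S|}, there exists a local map μ : A^S → A whose minimal neighborhood is all of S and whose activity value α(μ) equals k. -/

import Mathlib

private lemma digit_eq_of {a j : ℕ} {x y : ℕ}
    (h1 : x % a ^ j = y % a ^ j) (h2 : x / a ^ (j + 1) = y / a ^ (j + 1)) :
    ∀ i, i ≠ j → x / a ^ i % a = y / a ^ i % a := by
  intro i hij
  rcases Nat.lt_or_ge i j with h | h
  · have key : ∀ t : ℕ, t / a ^ i % a = t % a ^ j % a ^ (i + 1) / a ^ i := by
      intro t
      rw [← Nat.mod_mul_right_div_self, ← pow_succ,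
        Nat.mod_mod_of_dvd t (pow_dvd_pow a (by omega : i + 1 ≤ j))]
    rw [key x, key y, h1]
  · have key : ∀ t : ℕ, t / a ^ i = t / a ^ (j + 1) / a ^ (i - j - 1) := by
      intro t
      rw [Nat.div_div_eq_div_mul, ← pow_add]
      congr 2
      omega
    rw [key x, key y, h2]

private lemma modP {a : ℕ} (j u L : ℕ) :
    (a ^ (j + 1) * u + L) % a ^ j = L % a ^ j := by
  rw [pow_succ, Nat.mul_assoc, Nat.mul_add_mod]

private lemma divQ {a : ℕ} (j u L : ℕ) (hL : L < a ^ (j + 1)) (ha : 0 < a) :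
    (a ^ (j + 1) * u + L) / a ^ (j + 1) = u := by
  rw [Nat.mul_add_div (by positivity), Nat.div_eq_of_lt hL]
  rfl

private lemma key_lemma (a c k : ℕ) (ha : 2 ≤ a) (hc : 2 ≤ c) (hk0 : 0 < k)
    (hk : k < a ^ c) :
    ∃ T : Finset ℕ, T.card = k ∧ (∀ x ∈ T, x < a ^ c) ∧
      (∀ j, 0 < j → j < c → ∃ x y : ℕ, x < a ^ c ∧ y < a ^ c ∧
        x % a ^ j = y % a ^ j ∧ x / a ^ (j + 1) = y / a ^ (j + 1) ∧ x ∈ T ∧ y ∉ T) ∧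
      (∃ x y : ℕ, x < a ^ c ∧ y < a ^ c ∧ x / a = y / a ∧ x % a ≠ y % a ∧
        (x ∈ T ↔ y ∈ T)) := by
  have ha0 : 0 < a := by omega
  have haac : a * a ≤ a ^ c := by
    calc a * a = a ^ 2 := by ring
    _ ≤ a ^ c := Nat.pow_le_pow_right ha0 hc
  have ha4 : 4 ≤ a * a := Nat.mul_le_mul ha ha
  by_cases hd : a ^ 2 ∣ k
  · -- Case B : T = [0, k-1) ∪ {k}
    have hak : a ∣ k := dvd_trans (dvd_pow_self a (by omega)) hd
    have hk4 : 4 ≤ k := le_trans (by calc (4:ℕ) ≤ a * a := ha4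
                                        _ = a ^ 2 := by ring) (Nat.le_of_dvd hk0 hd)
    have hka : k + a ≤ a ^ c := by
      obtain ⟨w1, hw1⟩ := hak
      obtain ⟨w2, hw2⟩ := dvd_pow_self a (by omega : c ≠ 0)
      have hw : w1 < w2 := by
        apply Nat.lt_of_mul_lt_mul_left (a := a)
        rw [← hw1, ← hw2]; exact hk
      have h2 : a * (w1 + 1) ≤ a * w2 := Nat.mul_le_mul_left a (by omega)
      rw [Nat.mul_add, Nat.mul_one] at h2
      omega
    refine ⟨insert k (Finset.range (k - 1)), ?_, ?_, ?_, ?_⟩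
    · rw [Finset.card_insert_of_notMem (by simp)]
      simp; omega
    · intro x hx
      simp at hx
      rcases hx with h | h <;> omega
    · intro j hj0 hjc
      have hP2 : a ≤ a ^ j := Nat.le_self_pow (by omega) a
      have hP0 : 0 < a ^ j := Nat.pow_pos ha0
      have hQ : a ^ (j + 1) = a ^ j * a := pow_succ a j
      have hQdvd : a ^ (j + 1) ∣ a ^ c := pow_dvd_pow a (by omega)
      have hN : (a - 1) * a ^ j + a ^ j = a ^ (j + 1) := by
        have h1 : (a - 1) * a ^ j = a * a ^ j - a ^ j := Nat.sub_one_mul _ _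
        have h2 : a ^ j ≤ a * a ^ j := Nat.le_mul_of_pos_left _ ha0
        have h3 : a ^ (j + 1) = a * a ^ j := pow_succ' a j
        omega
      have hN0 : 0 < (a - 1) * a ^ j := Nat.mul_pos (by omega) hP0
      by_cases hQk : a ^ (j + 1) ∣ k
      · -- B1 : x = k, y = k + a^j
        obtain ⟨u, hu⟩ := hQk
        obtain ⟨m, hm⟩ := hQdvd
        have hum : u < m := by
          have : a ^ (j + 1) * u < a ^ (j + 1) * m := by rw [← hu, ← hm]; exact hk
          exact lt_of_mul_lt_mul_left this (Nat.zero_le _)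
        have hkQ : k + a ^ (j + 1) ≤ a ^ c := by
          rw [hu, hm, ← Nat.mul_succ]
          exact Nat.mul_le_mul_left _ hum
        have hPQ : a ^ j < a ^ (j + 1) := by omega
        refine ⟨k, k + a ^ j, by omega, by omega, ?_, ?_, by simp, by simp; omega⟩
        · rw [Nat.add_mod_right]
        · rw [hu, Nat.mul_div_cancel_left _ (by positivity : 0 < a ^ (j + 1)),
            Nat.mul_add_div (by positivity : 0 < a ^ (j + 1)), Nat.div_eq_of_lt hPQ]
          omega
      · -- B2
        set q := (k - 1) / a ^ (j + 1) with hqdef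
        set r := (k - 1) % a ^ (j + 1) with hrdef
        have hkeq : a ^ (j + 1) * q + r = k - 1 := Nat.div_add_mod _ _
        have hrQ : r < a ^ (j + 1) := Nat.mod_lt _ (by positivity)
        have hr0 : 0 < r := by
          rcases Nat.eq_zero_or_pos r with h | h
          · exfalso
            rw [hrdef] at h
            have hdvd : a ∣ k - 1 :=
              dvd_trans (dvd_pow_self a (Nat.succ_ne_zero j)) (Nat.dvd_of_mod_eq_zero h)
            have h1 : a ∣ k - (k - 1) := Nat.dvd_sub hak hdvd
            have h2 : k - (k - 1) = 1 := by omega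
            rw [h2] at h1
            have := Nat.le_of_dvd (by omega) h1
            omega
          · exact h
        obtain ⟨m, hm⟩ := hQdvd
        have hMlt : a ^ (j + 1) * q < a ^ c := by omega
        have hqm : q < m := by
          rw [hm] at hMlt
          exact lt_of_mul_lt_mul_left hMlt (Nat.zero_le _)
        have hy2 : a ^ (j + 1) * q + a ^ (j + 1) ≤ a ^ c := by
          rw [hm, ← Nat.mul_succ]
          exact Nat.mul_le_mul_left _ hqm
        by_cases hr2 : r ≤ (a - 1) * a ^ j
        · by_cases hyk : a ^ (j + 1) * q + (a - 1) * a ^ j = k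
          · -- B2b : x = M + 1, y = k + 1
            have hN3 : 3 ≤ (a - 1) * a ^ j := by
              by_contra hcon
              push_neg at hcon
              have ha2 : a = 2 := by
                by_contra hca
                have : 2 * 2 ≤ (a - 1) * a ^ j := Nat.mul_le_mul (by omega) (by omega)
                omega
              have hj1 : j = 1 := by
                by_contra hcj
                have h4 : a ^ 2 ≤ a ^ j := Nat.pow_le_pow_right ha0 (by omega)
                have h5 : a * a = a ^ 2 := by ring
                have : 1 * (a * a) ≤ (a - 1) * a ^ j :=
                  Nat.mul_le_mul (by omega) (by omega)
                omega
              rw [ha2] at hd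
              rw [ha2, hj1] at hyk
              norm_num at hyk hd
              omega
            refine ⟨a ^ (j + 1) * q + 1, k + 1, by omega, by omega, ?_, ?_, ?_, ?_⟩
            · have hy' : k + 1 = a ^ (j + 1) * q + ((a - 1) * a ^ j + 1) := by omega
              rw [hy', modP, modP, Nat.add_comm, Nat.add_mul_mod_self_right]
            · have hy' : k + 1 = a ^ (j + 1) * q + ((a - 1) * a ^ j + 1) := by omega
              rw [hy', divQ _ _ _ (by omega) ha0, divQ _ _ _ (by omega) ha0]
            · simp; omega
            · simp; omega
          · -- B2a : x = M, y = M + N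
            refine ⟨a ^ (j + 1) * q, a ^ (j + 1) * q + (a - 1) * a ^ j,
              by omega, by omega, ?_, ?_, ?_, ?_⟩
            · conv_lhs => rw [← Nat.add_zero (a ^ (j + 1) * q)]
              rw [modP, modP, Nat.zero_mod, Nat.mul_mod_left]
            · conv_lhs => rw [← Nat.add_zero (a ^ (j + 1) * q)]
              rw [divQ _ _ _ (by omega) ha0, divQ _ _ _ (by omega) ha0]
            · simp; omega
            · simp; omega
        · -- B2c : x = M + (r - N), y = M + r = k - 1
          push_neg at hr2
          refine ⟨a ^ (j + 1) * q + (r - (a - 1) * a ^ j), a ^ (j + 1) * q + r,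
            by omega, by omega, ?_, ?_, ?_, ?_⟩
          · rw [modP, modP]
            conv_rhs => rw [show r = r - (a - 1) * a ^ j + (a - 1) * a ^ j by omega]
            rw [Nat.add_mul_mod_self_right]
          · rw [divQ _ _ _ (by omega) ha0, divQ _ _ _ (by omega) ha0]
          · simp; omega
          · simp; omega
    · -- e-clause, case B
      refine ⟨0, 1, by omega, by omega, ?_, ?_, ?_⟩
      · rw [Nat.zero_div, Nat.div_eq_of_lt (by omega)]
      · rw [Nat.zero_mod, Nat.mod_eq_of_lt (by omega)]; omega
      · simp; omega
  · -- Case A : T = [0, k)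
    have hQk2 : ∀ j, 0 < j → ¬ a ^ (j + 1) ∣ k := by
      intro j hj0 hdd
      exact hd (dvd_trans (pow_dvd_pow a (by omega : 2 ≤ j + 1)) hdd)
    refine ⟨Finset.range k, Finset.card_range k, ?_, ?_, ?_⟩
    · intro x hx
      simp at hx
      omega
    · intro j hj0 hjc
      have hP2 : a ≤ a ^ j := Nat.le_self_pow (by omega) a
      have hP0 : 0 < a ^ j := Nat.pow_pos ha0
      have hQdvd : a ^ (j + 1) ∣ a ^ c := pow_dvd_pow a (by omega)
      have hN : (a - 1) * a ^ j + a ^ j = a ^ (j + 1) := by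
        have h1 : (a - 1) * a ^ j = a * a ^ j - a ^ j := Nat.sub_one_mul _ _
        have h2 : a ^ j ≤ a * a ^ j := Nat.le_mul_of_pos_left _ ha0
        have h3 : a ^ (j + 1) = a * a ^ j := pow_succ' a j
        omega
      have hN0 : 0 < (a - 1) * a ^ j := Nat.mul_pos (by omega) hP0
      set q := k / a ^ (j + 1) with hqdef
      set r := k % a ^ (j + 1) with hrdef
      have hkeq : a ^ (j + 1) * q + r = k := Nat.div_add_mod _ _
      have hrQ : r < a ^ (j + 1) := Nat.mod_lt _ (by positivity)
      have hr0 : 0 < r := by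
        rcases Nat.eq_zero_or_pos r with h | h
        · exfalso
          rw [hrdef] at h
          exact hQk2 j hj0 (Nat.dvd_of_mod_eq_zero h)
        · exact h
      obtain ⟨m, hm⟩ := hQdvd
      have hMlt : a ^ (j + 1) * q < a ^ c := by omega
      have hqm : q < m := by
        rw [hm] at hMlt
        exact lt_of_mul_lt_mul_left hMlt (Nat.zero_le _)
      have hy2 : a ^ (j + 1) * q + a ^ (j + 1) ≤ a ^ c := by
        rw [hm, ← Nat.mul_succ]
        exact Nat.mul_le_mul_left _ hqm
      by_cases hr2 : r ≤ (a - 1) * a ^ j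
      · -- x = M, y = M + N
        refine ⟨a ^ (j + 1) * q, a ^ (j + 1) * q + (a - 1) * a ^ j,
          by omega, by omega, ?_, ?_, ?_, ?_⟩
        · conv_lhs => rw [← Nat.add_zero (a ^ (j + 1) * q)]
          rw [modP, modP, Nat.zero_mod, Nat.mul_mod_left]
        · conv_lhs => rw [← Nat.add_zero (a ^ (j + 1) * q)]
          rw [divQ _ _ _ (by omega) ha0, divQ _ _ _ (by omega) ha0]
        · simp; omega
        · simp; omega
      · -- x = M + (r - N), y = k
        push_neg at hr2
        refine ⟨a ^ (j + 1) * q + (r - (a - 1) * a ^ j), k,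
          by omega, by omega, ?_, ?_, ?_, ?_⟩
        · conv_rhs => rw [show k = a ^ (j + 1) * q + r by omega]
          rw [modP, modP]
          conv_rhs => rw [show r = r - (a - 1) * a ^ j + (a - 1) * a ^ j by omega]
          rw [Nat.add_mul_mod_self_right]
        · conv_rhs => rw [show k = a ^ (j + 1) * q + r by omega]
          rw [divQ _ _ _ (by omega) ha0, divQ _ _ _ (by omega) ha0]
        · simp; omega
        · simp
    · -- e-clause, case A
      by_cases hk2 : 2 ≤ k
      · refine ⟨0, 1, by omega, by omega, ?_, ?_, ?_⟩
        · rw [Nat.zero_div, Nat.div_eq_of_lt (by omega)]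
        · rw [Nat.zero_mod, Nat.mod_eq_of_lt (by omega)]; omega
        · simp; omega
      · -- k = 1 : x = a, y = a + 1, both outside T
        have hk1 : k = 1 := by omega
        have h2a : 2 * a ≤ a * a := Nat.mul_le_mul_right a ha
        refine ⟨a, a + 1, by omega, by omega, ?_, ?_, ?_⟩
        · have h1 : (a + 1) / a = 1 := by
            rw [Nat.add_comm, Nat.add_div_right _ ha0, Nat.div_eq_of_lt (by omega : 1 < a)]
          rw [Nat.div_self ha0, h1]
        · have h1 : (a + 1) % a = 1 := by
            rw [Nat.add_comm, Nat.add_mod_right, Nat.mod_eq_of_lt (by omega : 1 < a)]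
          rw [Nat.mod_self, h1]
          omega
        · simp; omega

theorem stmt11 (A S : Type*) [Fintype A] [Fintype S] [DecidableEq S]
    (hA : 2 ≤ Fintype.card A) (hS : 2 ≤ Fintype.card S) (e : S)
    (k : ℕ) (hk0 : 0 < k) (hk : k < Fintype.card A ^ Fintype.card S) :
    ∃ μ : (S → A) → A,
      (∀ s : S, ∃ z w : S → A, (∀ t, t ≠ s → z t = w t) ∧ μ z ≠ μ w) ∧
      Nat.card {z : S → A // μ z ≠ z e} = k := by
  classical
  obtain ⟨T, hTcard, hTsub, hjcl, hecl⟩ :=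
    key_lemma (Fintype.card A) (Fintype.card S) k hA hS hk0 hk
  set aA := Fintype.card A with haA
  set cS := Fintype.card S with hcS
  haveI : NeZero aA := ⟨by omega⟩
  haveI : NeZero cS := ⟨by omega⟩
  let eA : A ≃ Fin aA := Fintype.equivFin A
  let eS : S ≃ Fin cS := (Fintype.equivFin S).trans (Equiv.swap (Fintype.equivFin S e) 0)
  have heS : eS e = 0 := by
    simp only [eS, Equiv.trans_apply, Equiv.swap_apply_left]
  let E : (S → A) ≃ Fin (aA ^ cS) := (Equiv.arrowCongr eS eA).trans finFunctionFinEquiv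
  have hdig : ∀ (x : Fin (aA ^ cS)) (t : S),
      (eA (E.symm x t) : ℕ) = (x : ℕ) / aA ^ ((eS t : ℕ)) % aA := by
    intro x t
    show (eA ((Equiv.arrowCongr eS eA).symm (finFunctionFinEquiv.symm x) t) : ℕ) = _
    simp only [Equiv.arrowCongr_symm, Equiv.arrowCongr_apply, Function.comp_apply,
      Equiv.symm_symm, Equiv.apply_symm_apply]
    rfl
  -- σ : a fixed-point-free injection
  let σ : A → A := fun b => eA.symm ⟨((eA b : ℕ) + 1) % aA, Nat.mod_lt _ (by omega)⟩
  have hσval : ∀ b, (eA (σ b) : ℕ) = ((eA b : ℕ) + 1) % aA := by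
    intro b; simp [σ]
  have hcanc : ∀ v w : ℕ, v < aA → w < aA → (v + 1) % aA = (w + 1) % aA → v = w := by
    intro v w hv hw h
    rcases Nat.lt_or_ge (v + 1) aA with h1 | h1 <;>
      rcases Nat.lt_or_ge (w + 1) aA with h2 | h2
    · rw [Nat.mod_eq_of_lt h1, Nat.mod_eq_of_lt h2] at h; omega
    · have : w + 1 = aA := by omega
      rw [Nat.mod_eq_of_lt h1, this, Nat.mod_self] at h; omega
    · have : v + 1 = aA := by omega
      rw [Nat.mod_eq_of_lt h2, this, Nat.mod_self] at h; omega
    · omega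
  have hσ1 : ∀ b, σ b ≠ b := by
    intro b h
    have h2 := congrArg (fun t => (eA t : ℕ)) h
    simp only [hσval] at h2
    rcases Nat.lt_or_ge ((eA b : ℕ) + 1) aA with h1 | h1
    · rw [Nat.mod_eq_of_lt h1] at h2; omega
    · have h3 : (eA b : ℕ) + 1 = aA := by have := (eA b).isLt; omega
      rw [h3, Nat.mod_self] at h2
      have := (eA b).isLt
      omega
  have hσinj : Function.Injective σ := by
    intro b1 b2 h
    apply eA.injective
    apply Fin.val_injective
    have h2 := congrArg (fun t => (eA t : ℕ)) h
    simp only [hσval] at h2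
    exact hcanc _ _ (eA b1).isLt (eA b2).isLt h2
  have hcoord : ∀ (x y : Fin (aA ^ cS)) (s : S),
      (∀ i : ℕ, i ≠ (eS s : ℕ) → (x : ℕ) / aA ^ i % aA = (y : ℕ) / aA ^ i % aA) →
      ∀ t, t ≠ s → E.symm x t = E.symm y t := by
    intro x y s hxy t hts
    have hne : ((eS t : ℕ)) ≠ (eS s : ℕ) := fun hh =>
      hts (eS.injective (Fin.val_injective hh))
    apply eA.injective
    apply Fin.val_injective
    rw [hdig, hdig]
    exact hxy _ hne
  refine ⟨fun z => if ((E z : ℕ) ∈ T) then σ (z e) else z e, ?_, ?_⟩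
  · intro s
    by_cases hse : s = e
    · subst hse
      obtain ⟨x, y, hx, hy, hdivxy, hmodxy, hiffxy⟩ := hecl
      have hd0 : ∀ i, i ≠ ((eS s : ℕ)) →
          x / aA ^ i % aA = y / aA ^ i % aA := by
        intro i hi
        rw [heS] at hi
        apply digit_eq_of (j := 0)
        · simp [Nat.mod_one]
        · simpa using hdivxy
        · simpa using hi
      refine ⟨E.symm ⟨x, hx⟩, E.symm ⟨y, hy⟩, hcoord _ _ _ (by exact_mod_cast hd0), ?_⟩
      have hEx : ((E (E.symm ⟨x, hx⟩)) : ℕ) = x := by simp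
      have hEy : ((E (E.symm ⟨y, hy⟩)) : ℕ) = y := by simp
      have hzeval : (eA ((E.symm ⟨x, hx⟩) s) : ℕ) = x % aA := by
        rw [hdig, heS]; simp
      have hweval : (eA ((E.symm ⟨y, hy⟩) s) : ℕ) = y % aA := by
        rw [hdig, heS]; simp
      have hzw : (E.symm ⟨x, hx⟩) s ≠ (E.symm ⟨y, hy⟩) s := by
        intro hh
        apply hmodxy
        have h2 := congrArg (fun t => (eA t : ℕ)) hh
        simp only [hzeval, hweval] at h2
        exact h2
      simp only [hEx, hEy]
      by_cases hxT : x ∈ T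
      · rw [if_pos hxT, if_pos (hiffxy.mp hxT)]
        intro hh; exact hzw (hσinj hh)
      · rw [if_neg hxT, if_neg (fun hh => hxT (hiffxy.mpr hh))]
        exact hzw
    · have hvne : (eS s : ℕ) ≠ (eS e : ℕ) := fun hh =>
        hse (eS.injective (Fin.val_injective hh))
      rw [heS] at hvne
      have hj0 : 0 < (eS s : ℕ) := by
        simp only [Fin.val_zero] at hvne
        omega
      obtain ⟨x, y, hx, hy, hmodxy, hdivxy, hxT, hyT⟩ :=
        hjcl (eS s : ℕ) hj0 (eS s).isLt
      refine ⟨E.symm ⟨x, hx⟩, E.symm ⟨y, hy⟩,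
        hcoord _ _ _ (fun i hi => digit_eq_of hmodxy hdivxy i hi), ?_⟩
      have hEx : ((E (E.symm ⟨x, hx⟩)) : ℕ) = x := by simp
      have hEy : ((E (E.symm ⟨y, hy⟩)) : ℕ) = y := by simp
      have hze : (E.symm ⟨x, hx⟩) e = (E.symm ⟨y, hy⟩) e := by
        apply eA.injective
        apply Fin.val_injective
        rw [hdig, hdig]
        refine digit_eq_of hmodxy hdivxy (eS e : ℕ) ?_
        rw [heS]
        simp only [Fin.val_zero]
        omega
      simp only [hEx, hEy]
      rw [if_pos hxT, if_neg hyT, ← hze]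
      exact hσ1 _
  · have hiff : ∀ z : S → A,
        ((if ((E z : ℕ) ∈ T) then σ (z e) else z e) ≠ z e) ↔ ((E z : ℕ) ∈ T) := by
      intro z
      by_cases h : (E z : ℕ) ∈ T
      · simp only [if_pos h]
        exact ⟨fun _ => h, fun _ => hσ1 _⟩
      · simp only [if_neg h]
        simp [h]
    rw [Nat.card_congr (Equiv.subtypeEquivRight hiff)]
    rw [Nat.card_congr (Equiv.subtypeEquiv E (fun z => Iff.rfl) :
      {z : S → A // ((E z : ℕ) ∈ T)} ≃ {x : Fin (aA ^ cS) // (x : ℕ) ∈ T})]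
    rw [Nat.card_eq_fintype_card, Fintype.card_subtype]
    rw [← hTcard]
    refine Finset.card_bij (fun (x : Fin (aA ^ cS)) (_ : x ∈ Finset.filter (fun (v : Fin (aA ^ cS)) => (v : ℕ) ∈ T) Finset.univ) => (x : ℕ)) ?_ ?_ ?_
    · intro x hxmem
      simp only [Finset.mem_filter] at hxmem
      exact hxmem.2
    · intro x1 h1 x2 h2 hh
      exact Fin.val_injective hh
    · intro b hb
      exact ⟨⟨b, hTsub b hb⟩, by simp [hb], rfl⟩
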